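/- arXiv:2207.03045 — 6 statements merged into one kernel-verified Lean document; each statement's English description precedes it below -/
import Mathlib

section
/- Let m ≥ 17 be a real number. Then for all x ≥ √(m-1), the polynomial h(x) = x³ - x² - (m-3)x + (m-2) satisfies h(x) > 0. -/
/-- Key polynomial comparison in Lemma 3.1: for real `m ≥ 17` and all
`x ≥ √(m-1)`, the polynomial `h(x) = x³ - x² - (m-3)x + (m-2)` is positive. -/
theorem stmt_0 (m x : ℝ) (hm : 17 ≤ m) (hx : Real.sqrt (m - 1) ≤ x) :
    x ^ 3 - x ^ 2 - (m - 3) * x + (m - 2) > 0 := by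
  have h1 : (0:ℝ) ≤ m - 1 := by linarith
  have h2 : m - 1 ≤ x ^ 2 := by
    nlinarith [Real.sq_sqrt h1, Real.sqrt_nonneg (m - 1), hx]
  have h4 : (4:ℝ) ≤ x := by
    calc (4:ℝ) = Real.sqrt 16 := by
          rw [show (16:ℝ) = 4^2 by norm_num, Real.sqrt_sq]; norm_num
      _ ≤ Real.sqrt (m - 1) := Real.sqrt_le_sqrt (by linarith)
      _ ≤ x := hx
  nlinarith [mul_le_mul_of_nonneg_right h2 (by linarith : (0:ℝ) ≤ x - 1)]
end

section
/- For real m ≥ 17, the largest real root of f₂(x) = x⁴ - m x² - 4x + 2m - 10 is strictly less than the largest real root of f(x) = x³ - x² - (m-1)x + m - 3, given that the largest root of f exceeds √(m-1). -/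
/-- For real `m ≥ 17`, the largest real root of `f₂(x) = x⁴ - m x² - 4x + 2m - 10`
is strictly less than the largest real root of `f(x) = x³ - x² - (m-1)x + m - 3`,
given that the largest root of `f` exceeds `√(m-1)`. -/
theorem stmt_2 (m a b : ℝ) (hm : 17 ≤ m)
    (ha : a ^ 4 - m * a ^ 2 - 4 * a + 2 * m - 10 = 0)
    (hamax : ∀ y : ℝ, y ^ 4 - m * y ^ 2 - 4 * y + 2 * m - 10 = 0 → y ≤ a)
    (hb : b ^ 3 - b ^ 2 - (m - 1) * b + m - 3 = 0)
    (hbmax : ∀ y : ℝ, y ^ 3 - y ^ 2 - (m - 1) * y + m - 3 = 0 → y ≤ b)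
    (hbgt : Real.sqrt (m - 1) < b) :
    a < b := by
  have hbpos : 0 < b := lt_of_le_of_lt (Real.sqrt_nonneg _) hbgt
  have hb2 : m - 1 < b ^ 2 := by
    have := (Real.sqrt_lt' hbpos).mp hbgt
    linarith
  have hb4 : 4 < b := by nlinarith [hb2, hbpos]
  -- f₂(b) > 0
  have key : (b - 1) * (b ^ 4 - m * b ^ 2 - 4 * b + 2 * m - 10) =
      b ^ 3 - 3 * b ^ 2 - 4 * b + 4 +
      (b ^ 2 - 2) * (b ^ 3 - b ^ 2 - (m - 1) * b + m - 3) := by ring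
  rw [hb, mul_zero, add_zero] at key
  have hf2b : 0 < b ^ 4 - m * b ^ 2 - 4 * b + 2 * m - 10 := by
    have h1 : 0 < b ^ 3 - 3 * b ^ 2 - 4 * b + 4 := by nlinarith
    nlinarith [key, h1]
  by_contra h
  push_neg at h
  have hab : m - 1 < a ^ 2 := by nlinarith
  have hdiff : (a ^ 4 - m * a ^ 2 - 4 * a + 2 * m - 10) -
      (b ^ 4 - m * b ^ 2 - 4 * b + 2 * m - 10) =
      (a - b) * ((a + b) * (a ^ 2 + b ^ 2 - m) - 4) := by ring
  have hbr : 0 ≤ (a - b) * ((a + b) * (a ^ 2 + b ^ 2 - m) - 4) := by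
    apply mul_nonneg (by linarith)
    nlinarith
  rw [ha] at hdiff
  linarith
end

section
/- Let m ≥ 22 and t ∈ {1, 2}. Then f₃((1+√(4m-7))/2) < 0, where f₃(x) = x⁴ - m x² - (m-t-1)x + (t/2)(m-t-1). Consequently the largest real root of f₃ is strictly greater than (1+√(4m-7))/2. -/
/-- Lemma 4.2(ii): for `m ≥ 22` and `t ∈ {1,2}`, the polynomial
`f₃(x) = x⁴ - m x² - (m-t-1)x + (t/2)(m-t-1)` is negative at `x = (1+√(4m-7))/2`;
consequently its largest real root is strictly greater than `(1+√(4m-7))/2`. -/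
theorem stmt_4 (m t : ℝ) (hm : 22 ≤ m) (ht : t = 1 ∨ t = 2) :
    (fun x : ℝ => x ^ 4 - m * x ^ 2 - (m - t - 1) * x + (t / 2) * (m - t - 1))
        ((1 + Real.sqrt (4 * m - 7)) / 2) < 0 ∧
    ∀ z : ℝ,
      ((z ^ 4 - m * z ^ 2 - (m - t - 1) * z + (t / 2) * (m - t - 1) = 0) ∧
        (∀ y : ℝ, y ^ 4 - m * y ^ 2 - (m - t - 1) * y + (t / 2) * (m - t - 1) = 0 → y ≤ z)) →
      (1 + Real.sqrt (4 * m - 7)) / 2 < z := by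
  set s := Real.sqrt (4 * m - 7) with hs
  have hs0 : 0 ≤ s := Real.sqrt_nonneg _
  have hs2 : s ^ 2 = 4 * m - 7 := Real.sq_sqrt (by linarith)
  have hneg : ((1 + s) / 2) ^ 4 - m * ((1 + s) / 2) ^ 2 - (m - t - 1) * ((1 + s) / 2) + (t / 2) * (m - t - 1) < 0 := by
    rcases ht with ht | ht <;> subst ht <;>
      nlinarith [hs2, hs0, sq_nonneg s, sq_nonneg (s - 1), sq_nonneg (s + 1)]
  set x₀ := (1 + s) / 2 with hx₀
  refine ⟨hneg, ?_⟩
  rintro z ⟨hz, hmax⟩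
  -- find a root y in [x₀, m]
  have hx₀m : x₀ ≤ m := by
    rw [hx₀]; nlinarith [sq_nonneg (s - (2 * m - 1))]
  have hfm : 0 ≤ m ^ 4 - m * m ^ 2 - (m - t - 1) * m + (t / 2) * (m - t - 1) := by
    rcases ht with ht | ht <;> subst ht <;> nlinarith [sq_nonneg (m ^ 2 - m), mul_pos (mul_pos (by linarith : (0:ℝ) < m) (by linarith : (0:ℝ) < m)) (by linarith : (0:ℝ) < m - 1)]
  have hcont : ContinuousOn
      (fun x : ℝ => x ^ 4 - m * x ^ 2 - (m - t - 1) * x + (t / 2) * (m - t - 1))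
      (Set.Icc x₀ m) := by
    apply Continuous.continuousOn; continuity
  have h0 : (0 : ℝ) ∈ Set.Icc
      ((fun x : ℝ => x ^ 4 - m * x ^ 2 - (m - t - 1) * x + (t / 2) * (m - t - 1)) x₀)
      ((fun x : ℝ => x ^ 4 - m * x ^ 2 - (m - t - 1) * x + (t / 2) * (m - t - 1)) m) :=
    ⟨le_of_lt hneg, hfm⟩
  obtain ⟨y, hy_mem, hy_root⟩ := intermediate_value_Icc hx₀m hcont h0
  have hyz : y ≤ z := hmax y hy_root
  have hyx : x₀ < y := by
    rcases lt_or_eq_of_le hy_mem.1 with h | h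
    · exact h
    · exfalso; rw [← h] at hy_root; simp at hy_root; linarith [hneg, hy_root]
  linarith
end

section
/- Let G be a graph and v a vertex with degree d ≥ 1. Then ρ(G) ≤ √(ρ(G - v)² + 2d - 1), where ρ denotes the adjacency spectral radius. -/
open Matrix

/-- The real adjacency matrix of a simple graph. -/
noncomputable def adjMat {V : Type*} [Fintype V] (G : SimpleGraph V) : Matrix V V ℝ :=
  Matrix.of fun i j =>
    haveI := Classical.propDecidable (G.Adj i j)
    if G.Adj i j then (1 : ℝ) else 0

/-- The adjacency spectral radius of a finite simple graph, as the supremum of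
the Rayleigh quotient of its (symmetric) adjacency matrix. -/
noncomputable def specRad {V : Type*} [Fintype V] (G : SimpleGraph V) : ℝ :=
  ⨆ x : {x : V → ℝ // x ≠ 0}, (x.1 ⬝ᵥ (adjMat G *ᵥ x.1)) / (x.1 ⬝ᵥ x.1)

open Matrix Finset
open scoped RealInnerProductSpace
namespace SpecAux
variable {W : Type*} [Fintype W] [DecidableEq W]

noncomputable def supQ (B : Matrix W W ℝ) : ℝ :=
  ⨆ x : {x : W → ℝ // x ≠ 0}, (x.1 ⬝ᵥ (B *ᵥ x.1)) / (x.1 ⬝ᵥ x.1)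

lemma dot_self_nonneg (x : W → ℝ) : 0 ≤ x ⬝ᵥ x :=
  Finset.sum_nonneg fun _ _ => mul_self_nonneg _

lemma dot_self_pos {x : W → ℝ} (hx : x ≠ 0) : 0 < x ⬝ᵥ x := by
  obtain ⟨i, hi⟩ := Function.ne_iff.1 hx
  exact Finset.sum_pos' (fun j _ => mul_self_nonneg _)
    ⟨i, Finset.mem_univ i, mul_self_pos.2 hi⟩

lemma quad_le_card (B : Matrix W W ℝ) (hnn : ∀ i j, (0:ℝ) ≤ B i j)
    (hub : ∀ i j, B i j ≤ 1) (x : W → ℝ) :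
    x ⬝ᵥ (B *ᵥ x) ≤ (Fintype.card W : ℝ) * (x ⬝ᵥ x) := by
  have h1 : x ⬝ᵥ (B *ᵥ x) ≤ ∑ i, ∑ j, |x i| * |x j| := by
    simp only [dotProduct, mulVec, Finset.mul_sum]
    refine Finset.sum_le_sum fun i _ => Finset.sum_le_sum fun j _ => ?_
    calc x i * (B i j * x j) ≤ |x i * (B i j * x j)| := le_abs_self _
      _ = |x i| * (B i j * |x j|) := by
          rw [abs_mul, abs_mul, abs_of_nonneg (hnn i j)]
      _ ≤ |x i| * (1 * |x j|) := by
          have := abs_nonneg (x i); have := abs_nonneg (x j)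
          gcongr; exact hub i j
      _ = |x i| * |x j| := by ring
  have h2 : ∑ i, ∑ j, |x i| * |x j| = (∑ i, |x i|) ^ 2 := by
    rw [sq, Finset.sum_mul]; exact Finset.sum_congr rfl fun i _ => by rw [Finset.mul_sum]
  have h3 : (∑ i, |x i|) ^ 2 ≤ (Fintype.card W : ℝ) * ∑ i, |x i| ^ 2 :=
    sq_sum_le_card_mul_sum_sq
  have h4 : ∑ i, |x i| ^ 2 = x ⬝ᵥ x := by
    simp [dotProduct, sq_abs, sq]
  calc x ⬝ᵥ (B *ᵥ x) ≤ (∑ i, |x i|)^2 := by rw [← h2]; exact h1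
    _ ≤ (Fintype.card W : ℝ) * ∑ i, |x i| ^ 2 := h3
    _ = _ := by rw [h4]

lemma bdd (B : Matrix W W ℝ) (hnn : ∀ i j, (0:ℝ) ≤ B i j) (hub : ∀ i j, B i j ≤ 1) :
    BddAbove (Set.range fun x : {x : W → ℝ // x ≠ 0} =>
      (x.1 ⬝ᵥ (B *ᵥ x.1)) / (x.1 ⬝ᵥ x.1)) := by
  refine ⟨(Fintype.card W : ℝ), ?_⟩
  rintro r ⟨x, rfl⟩
  have hpos := dot_self_pos x.2
  rw [div_le_iff₀ hpos]
  exact quad_le_card B hnn hub x.1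

lemma quad_le (B : Matrix W W ℝ) (hnn : ∀ i j, (0:ℝ) ≤ B i j) (hub : ∀ i j, B i j ≤ 1)
    (y : W → ℝ) : y ⬝ᵥ (B *ᵥ y) ≤ supQ B * (y ⬝ᵥ y) := by
  rcases eq_or_ne y 0 with rfl | hy
  · simp [dotProduct]
  · have h := le_ciSup (bdd B hnn hub) (⟨y, hy⟩ : {x : W → ℝ // x ≠ 0})
    have hpos := dot_self_pos hy
    rw [div_le_iff₀ hpos] at h
    simpa [supQ] using h

lemma spectral (B : Matrix W W ℝ) (hs : ∀ i j, B i j = B j i)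
    (hnn : ∀ i j, (0:ℝ) ≤ B i j) (hub : ∀ i j, B i j ≤ 1) [Nonempty W] :
    (∀ y : W → ℝ, (B *ᵥ y) ⬝ᵥ (B *ᵥ y) ≤ (supQ B)^2 * (y ⬝ᵥ y)) ∧
    (∃ x : W → ℝ, (∀ i, 0 ≤ x i) ∧ x ⬝ᵥ x = 1 ∧ B *ᵥ x = supQ B • x) := by
  have hB : B.IsHermitian := by
    ext i j
    simp only [conjTranspose_apply, star_trivial]
    exact hs j i
  set b := hB.eigenvectorBasis with hb
  set lam := hB.eigenvalues with hlamdef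
  set u : W → W → ℝ := fun i => ⇑(b i) with hu
  have hmul : ∀ i, B *ᵥ u i = lam i • u i := fun i => hB.mulVec_eigenvectorBasis i
  have hdot0 : ∀ (f g : W → ℝ),
      (f ⬝ᵥ g) = ⟪(WithLp.equiv 2 (W → ℝ)).symm f, (WithLp.equiv 2 (W → ℝ)).symm g⟫ := by
    intro f g
    simp [PiLp.inner_apply, dotProduct, RCLike.inner_apply, starRingEnd_apply]
    exact Finset.sum_congr rfl fun _ _ => mul_comm _ _
  have horth : ∀ i j, u i ⬝ᵥ u j = if i = j then (1:ℝ) else 0 := by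
    intro i j
    rw [hdot0]
    exact orthonormal_iff_ite.1 b.orthonormal i j
  have hexp : ∀ y : W → ℝ, ∀ j, y j = ∑ i, (u i ⬝ᵥ y) * u i j := by
    intro y j
    have h := b.sum_repr' ((WithLp.equiv 2 (W → ℝ)).symm y)
    have h2 := congrArg (fun z : EuclideanSpace ℝ W => z j) h
    have h3 : (∑ i, ⟪b i, (WithLp.equiv 2 (W → ℝ)).symm y⟫ • b i) j
        = ∑ i, (⟪b i, (WithLp.equiv 2 (W → ℝ)).symm y⟫ • b i) j :=
      by simp
    refine (h2.symm.trans (h3.trans (Finset.sum_congr rfl fun i _ => ?_)) : _)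
    rw [hdot0]
    rfl
  -- Parseval-type identity
  have hpars : ∀ f g : W → ℝ, f ⬝ᵥ g = ∑ i, (u i ⬝ᵥ f) * (u i ⬝ᵥ g) := by
    intro f g
    calc f ⬝ᵥ g = ∑ j, f j * g j := rfl
      _ = ∑ j, ∑ i, f j * ((u i ⬝ᵥ g) * u i j) := by
          refine Finset.sum_congr rfl fun j _ => ?_
          rw [← Finset.mul_sum, ← hexp g j]
      _ = ∑ i, ∑ j, f j * ((u i ⬝ᵥ g) * u i j) := Finset.sum_comm
      _ = ∑ i, (u i ⬝ᵥ f) * (u i ⬝ᵥ g) := by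
          refine Finset.sum_congr rfl fun i _ => ?_
          rw [show (u i ⬝ᵥ f) = ∑ j, u i j * f j from rfl, Finset.sum_mul]
          exact Finset.sum_congr rfl fun j _ => by ring
  -- coefficient of B *ᵥ y
  have hcoef : ∀ (i : W) (y : W → ℝ), u i ⬝ᵥ (B *ᵥ y) = lam i * (u i ⬝ᵥ y) := by
    intro i y
    have h1 : u i ⬝ᵥ (B *ᵥ y) = (B *ᵥ u i) ⬝ᵥ y := by
      simp only [dotProduct, mulVec, Finset.mul_sum, Finset.sum_mul]
      rw [Finset.sum_comm]
      refine Finset.sum_congr rfl fun j _ => Finset.sum_congr rfl fun k _ => ?_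
      rw [hs j k]; ring
    rw [h1, hmul i, smul_dotProduct, smul_eq_mul]
  set r := supQ B with hrdef
  have hlam_le : ∀ i, lam i ≤ r := by
    intro i
    have h1 : u i ⬝ᵥ (B *ᵥ u i) = lam i := by
      rw [hmul i, dotProduct_smul, smul_eq_mul, horth i i, if_pos rfl, mul_one]
    have h2 := quad_le B hnn hub (u i)
    rw [h1, horth i i, if_pos rfl, mul_one] at h2
    exact h2
  have habs_le : ∀ i, -r ≤ lam i := by
    intro i
    have h1 : u i ⬝ᵥ (B *ᵥ u i) = lam i := by
      rw [hmul i, dotProduct_smul, smul_eq_mul, horth i i, if_pos rfl, mul_one]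
    set w : W → ℝ := fun j => |u i j| with hw
    have hww : w ⬝ᵥ w = (1:ℝ) := by
      have : w ⬝ᵥ w = u i ⬝ᵥ u i := by
        simp only [dotProduct, hw]
        exact Finset.sum_congr rfl fun j _ => abs_mul_abs_self _
      rw [this, horth i i, if_pos rfl]
    have hq := quad_le B hnn hub w
    rw [hww, mul_one] at hq
    have hlow : -(w ⬝ᵥ (B *ᵥ w)) ≤ u i ⬝ᵥ (B *ᵥ u i) := by
      simp only [dotProduct, mulVec, Finset.mul_sum, ← Finset.sum_neg_distrib]
      refine Finset.sum_le_sum fun j _ => Finset.sum_le_sum fun k _ => ?_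
      have : |u i j * (B j k * u i k)| = w j * (B j k * w k) := by
        rw [abs_mul, abs_mul, abs_of_nonneg (hnn j k)]
      calc -(w j * (B j k * w k)) = -|u i j * (B j k * u i k)| := by rw [this]
        _ ≤ u i j * (B j k * u i k) := neg_abs_le _
    rw [h1] at hlow
    linarith
  refine ⟨?_, ?_⟩
  · intro y
    have e1 : (B *ᵥ y) ⬝ᵥ (B *ᵥ y) = ∑ i, (lam i)^2 * (u i ⬝ᵥ y)^2 := by
      rw [hpars]
      exact Finset.sum_congr rfl fun i _ => by rw [hcoef]; ring
    have e2 : y ⬝ᵥ y = ∑ i, (u i ⬝ᵥ y)^2 := by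
      rw [hpars]; exact Finset.sum_congr rfl fun i _ => (sq _).symm
    rw [e1, e2, Finset.mul_sum]
    refine Finset.sum_le_sum fun i _ => ?_
    have : (lam i)^2 ≤ r^2 := sq_le_sq' (habs_le i) (hlam_le i)
    have h2 : (0:ℝ) ≤ (u i ⬝ᵥ y)^2 := sq_nonneg _
    calc (lam i)^2 * (u i ⬝ᵥ y)^2 ≤ r^2 * (u i ⬝ᵥ y)^2 := by gcongr
      _ = r^2 * (u i ⬝ᵥ y)^2 := rfl
  · -- Perron eigenvector
    obtain ⟨i0, hi0⟩ : ∃ i0, ∀ i, lam i ≤ lam i0 := Finite.exists_max lam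
    haveI : Nonempty {x : W → ℝ // x ≠ 0} :=
      ⟨⟨fun _ => 1, by
        intro h
        have := congrFun h (Classical.arbitrary W)
        simp at this⟩⟩
    have hr_le : r ≤ lam i0 := by
      refine ciSup_le fun x => ?_
      have hpos := dot_self_pos x.2
      rw [div_le_iff₀ hpos]
      have e1 : x.1 ⬝ᵥ (B *ᵥ x.1) = ∑ i, lam i * (u i ⬝ᵥ x.1)^2 := by
        rw [hpars]
        exact Finset.sum_congr rfl fun i _ => by rw [hcoef]; ring
      have e2 : x.1 ⬝ᵥ x.1 = ∑ i, (u i ⬝ᵥ x.1)^2 := by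
        rw [hpars]; exact Finset.sum_congr rfl fun i _ => (sq _).symm
      rw [e1, e2, Finset.mul_sum]
      exact Finset.sum_le_sum fun i _ => mul_le_mul_of_nonneg_right (hi0 i) (sq_nonneg _)
    have hreq : r = lam i0 := le_antisymm hr_le (hlam_le i0)
    set w : W → ℝ := fun j => |u i0 j| with hw
    have hww : w ⬝ᵥ w = (1:ℝ) := by
      have : w ⬝ᵥ w = u i0 ⬝ᵥ u i0 := by
        simp only [dotProduct, hw]
        exact Finset.sum_congr rfl fun j _ => abs_mul_abs_self _
      rw [this, horth i0 i0, if_pos rfl]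
    have hwBw_ge : r ≤ w ⬝ᵥ (B *ᵥ w) := by
      have h1 : u i0 ⬝ᵥ (B *ᵥ u i0) = lam i0 := by
        rw [hmul i0, dotProduct_smul, smul_eq_mul, horth i0 i0, if_pos rfl, mul_one]
      have hle : u i0 ⬝ᵥ (B *ᵥ u i0) ≤ w ⬝ᵥ (B *ᵥ w) := by
        simp only [dotProduct, mulVec, Finset.mul_sum]
        refine Finset.sum_le_sum fun j _ => Finset.sum_le_sum fun k _ => ?_
        have habs : |u i0 j * (B j k * u i0 k)| = w j * (B j k * w k) := by
          rw [abs_mul, abs_mul, abs_of_nonneg (hnn j k)]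
        calc u i0 j * (B j k * u i0 k) ≤ |u i0 j * (B j k * u i0 k)| := le_abs_self _
          _ = w j * (B j k * w k) := habs
      rw [hreq, ← h1]; exact hle
    have hwBw_le : w ⬝ᵥ (B *ᵥ w) ≤ r := by
      have := quad_le B hnn hub w
      rwa [hww, mul_one] at this
    have hwBw : w ⬝ᵥ (B *ᵥ w) = r := le_antisymm hwBw_le hwBw_ge
    have hsum0 : ∑ i, (r - lam i) * (u i ⬝ᵥ w)^2 = 0 := by
      have e1 : w ⬝ᵥ (B *ᵥ w) = ∑ i, lam i * (u i ⬝ᵥ w)^2 := by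
        rw [hpars]
        exact Finset.sum_congr rfl fun i _ => by rw [hcoef]; ring
      have e2 : (1:ℝ) = ∑ i, (u i ⬝ᵥ w)^2 := by
        rw [← hww, hpars]; exact Finset.sum_congr rfl fun i _ => (sq _).symm
      have : ∑ i, (r - lam i) * (u i ⬝ᵥ w)^2
          = r * ∑ i, (u i ⬝ᵥ w)^2 - ∑ i, lam i * (u i ⬝ᵥ w)^2 := by
        rw [Finset.mul_sum, ← Finset.sum_sub_distrib]
        exact Finset.sum_congr rfl fun i _ => by ring
      rw [this, ← e2, ← e1, hwBw, mul_one, sub_self]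
    have hkey : ∀ i, lam i * (u i ⬝ᵥ w) = r * (u i ⬝ᵥ w) := by
      intro i
      have h0 := (Finset.sum_eq_zero_iff_of_nonneg fun i _ =>
        mul_nonneg (by linarith [hlam_le i]) (sq_nonneg _)).1 hsum0 i (Finset.mem_univ i)
      rcases mul_eq_zero.1 h0 with h | h
      · have : lam i = r := by linarith
        rw [this]
      · have : u i ⬝ᵥ w = 0 := (pow_eq_zero_iff two_ne_zero).1 h
        rw [this, mul_zero, mul_zero]
    refine ⟨w, fun j => abs_nonneg _, hww, ?_⟩
    funext j
    have h1 : (B *ᵥ w) j = ∑ i, (u i ⬝ᵥ (B *ᵥ w)) * u i j := hexp (B *ᵥ w) j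
    have h2 : (B *ᵥ w) j = ∑ i, (r * (u i ⬝ᵥ w)) * u i j := by
      rw [h1]
      exact Finset.sum_congr rfl fun i _ => by rw [hcoef, hkey]
    rw [h2]
    have h3 : (r • w) j = r * ∑ i, (u i ⬝ᵥ w) * u i j := by
      rw [Pi.smul_apply, smul_eq_mul, ← hexp w j]
    rw [h3, Finset.mul_sum]
    exact Finset.sum_congr rfl fun i _ => by ring

end SpecAux


set_option maxHeartbeats 1000000 in
lemma algMain (R R' t σ dd s : ℝ) (hR : 1 ≤ R) (hR' : 0 ≤ R') (hdd : 1 ≤ dd)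
    (ht0 : 0 ≤ t) (hσ0 : 0 ≤ σ) (hts : t + σ ≤ 1)
    (hE1 : R^2*t = s^2) (hE2 : s^2 ≤ dd*σ)
    (hE3 : R*σ ≤ R*t + (dd-1)*σ + R*(1-t-σ))
    (hE4 : R^2*(1-t) - 2*(R^2*t) + dd*t ≤ R'^2*(1-t)) :
    R ≤ Real.sqrt (R'^2 + 2*dd - 1) := by
  have hR0 : 0 < R := lt_of_lt_of_le one_pos hR
  have hR2t : R^2*t ≤ dd*σ := hE1 ▸ hE2
  have hRR : 1 ≤ R^2 := by nlinarith [sq_nonneg (R-1)]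
  have ht1 : t < 1 := by
    by_contra h
    push_neg at h
    have hσ : σ ≤ 0 := by linarith
    have hσ' : dd * σ ≤ 0 := mul_nonpos_iff.2 (Or.inl ⟨by linarith, hσ⟩)
    have h1 : R^2 * 1 ≤ R^2 * t := mul_le_mul_of_nonneg_left h (by positivity)
    nlinarith
  set T : ℝ := 1 - σ with hT
  have htT : t ≤ T := by simp [hT]; linarith
  have hT0 : 0 ≤ T := le_trans ht0 htT
  have KEY : (2*R^2 - dd)*t ≤ (2*dd-1)*(1-t) := by
    rcases le_or_gt 1 ((dd+1)*T) with hc | hc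
    · -- case A
      have h2 : 2*(R^2*t) ≤ 2*(dd*(1-T)) := by
        have : dd * σ = dd*(1-T) := by rw [hT]; ring
        linarith [hR2t]
      have hprod : (dd-1)*t ≤ (dd-1)*T :=
        mul_le_mul_of_nonneg_left htT (by linarith)
      nlinarith
    · -- case B
      have h2T : 2*T < 1 := by
        have := mul_nonneg (sub_nonneg.2 hdd) hT0
        nlinarith [this]
      have hB' : R*(1-2*T) ≤ (dd-1)*(1-T) := by
        have : R*σ = R*(1-T) := by rw [hT]; ring
        nlinarith [hE3]
      have hRd : R ≤ dd := by
        have h3 : (dd-1)*(1-T) ≤ dd*(1-2*T) := by nlinarith [hc]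
        have h4 : R*(1-2*T) ≤ dd*(1-2*T) := le_trans hB' h3
        have h5 : 0 < 1-2*T := by linarith
        exact le_of_mul_le_mul_right (by linarith [h4]) h5
      have hR2d : R^2 ≤ dd^2 := by
        have := mul_le_mul hRd hRd (by linarith) (by linarith)
        nlinarith [this]
      have h6 : (dd+1)*t < 1 := by
        have := mul_le_mul_of_nonneg_left htT (by linarith : (0:ℝ) ≤ dd+1)
        nlinarith [this]
      have e1 : R^2*t ≤ dd^2*t := mul_le_mul_of_nonneg_right hR2d ht0
      have e2 : (0:ℝ) ≤ (2*dd-1)*(1-t-dd*t) :=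
        mul_nonneg (by linarith) (by linarith)
      nlinarith [e1, e2]
  have hfin : R^2 - R'^2 ≤ 2*dd - 1 := by
    have h7 : (R^2 - R'^2)*(1-t) ≤ (2*dd-1)*(1-t) := by linarith [hE4, KEY]
    have h8 : 0 < 1 - t := by linarith
    exact le_of_mul_le_mul_right (by linarith [h7]) h8
  rw [Real.le_sqrt (le_of_lt hR0) (by nlinarith [sq_nonneg R'])]
  linarith


/-- Vertex-deletion bound (Lemma 2.6): if `v` has degree `d ≥ 1` in `G`, then
`ρ(G) ≤ √(ρ(G - v)² + 2d - 1)`. -/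
theorem stmt_8 {V : Type*} [Fintype V] [DecidableEq V] (G : SimpleGraph V) (v : V) (d : ℕ)
    (hd : (G.neighborSet v).ncard = d) (hd1 : 1 ≤ d) :
    specRad G ≤ Real.sqrt ((specRad (G.induce {u : V | u ≠ v})) ^ 2 + 2 * d - 1) := by
  classical
  haveI : Nonempty V := ⟨v⟩
  set A := adjMat G with hAdef
  have hA : ∀ i j, A i j = if G.Adj i j then (1:ℝ) else 0 := by
    intro i j
    by_cases h : G.Adj i j <;> simp [hAdef, adjMat, h]
  have hA2 : ∀ i j, G.Adj i j → A i j = 1 := fun i j h => by rw [hA, if_pos h]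
  have hA0 : ∀ i j, ¬ G.Adj i j → A i j = 0 := fun i j h => by rw [hA, if_neg h]
  have hAs : ∀ i j, A i j = A j i := by
    intro i j
    by_cases h : G.Adj i j
    · rw [hA2 i j h, hA2 j i h.symm]
    · rw [hA0 i j h, hA0 j i fun h' => h h'.symm]
  have hAnn : ∀ i j, (0:ℝ) ≤ A i j := by
    intro i j; rw [hA]; split <;> norm_num
  have hAub : ∀ i j, A i j ≤ 1 := by
    intro i j; rw [hA]; split <;> norm_num
  set ρ := specRad G with hρdef
  have hρQ : ρ = SpecAux.supQ A := rfl
  -- the neighborhood finset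
  set Nv := Finset.univ.filter (fun u => G.Adj v u) with hNvdef
  have hNvmem : ∀ u, u ∈ Nv ↔ G.Adj v u := by
    intro u; simp [hNvdef]
  have hvnot : v ∉ Nv := by simp [hNvdef]
  have hNvcard : Nv.card = d := by
    rw [← hd, Set.ncard_eq_toFinset_card']
    congr 1
    ext u
    simp [hNvdef]
  have hNvcard' : (Nv.card : ℝ) = (d:ℝ) := by rw [hNvcard]
  obtain ⟨u₀, hu₀⟩ : ∃ u, G.Adj v u := by
    have : Nv.Nonempty := Finset.card_pos.1 (by rw [hNvcard]; exact hd1)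
    obtain ⟨u, hu⟩ := this
    exact ⟨u, (hNvmem u).1 hu⟩
  -- ρ ≥ 1
  have hρ1 : (1:ℝ) ≤ ρ := by
    have hbdd := SpecAux.bdd A hAnn hAub
    set z : V → ℝ := Pi.single v 1 + Pi.single u₀ 1 with hzdef
    have hzv : z v = 1 := by
      simp [hzdef, Pi.single_apply, (hu₀.ne' : u₀ ≠ v)]
    have hz0 : z ≠ 0 := by
      intro h
      rw [funext_iff] at h
      have := h v
      rw [hzv] at this
      simpa using this
    have hzAz : z ⬝ᵥ (A *ᵥ z) = 2 := by
      rw [hzdef, Matrix.mulVec_add, Matrix.mulVec_single, Matrix.mulVec_single]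
      rw [add_dotProduct, single_dotProduct, single_dotProduct]
      simp only [Pi.add_apply, Pi.smul_apply, Matrix.col_apply, MulOpposite.op_one, one_smul]
      rw [hA0 v v (G.irrefl), hA2 v u₀ hu₀, hA2 u₀ v hu₀.symm, hA0 u₀ u₀ (G.irrefl)]
      ring
    have hzz : z ⬝ᵥ z = 2 := by
      rw [hzdef, add_dotProduct, single_dotProduct, single_dotProduct]
      simp only [Pi.add_apply]
      rw [Pi.single_eq_same, Pi.single_eq_same,
        Pi.single_eq_of_ne (hu₀.ne' : u₀ ≠ v), Pi.single_eq_of_ne (hu₀.ne : v ≠ u₀)]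
      ring
    have h := le_ciSup hbdd (⟨z, hz0⟩ : {x : V → ℝ // x ≠ 0})
    rw [hρQ]
    refine le_trans ?_ h
    rw [hzAz, hzz]
    norm_num
  -- the induced graph
  set S : Set V := {u : V | u ≠ v} with hSdef
  set B : Matrix ↥S ↥S ℝ := adjMat (G.induce S) with hBdef
  set ρ' := specRad (G.induce S) with hρ'def
  have hρ'Q : ρ' = SpecAux.supQ B := rfl
  have hu₀S : u₀ ∈ S := by simp [hSdef]; exact hu₀.ne'
  haveI : Nonempty ↥S := ⟨⟨u₀, hu₀S⟩⟩
  have hindadj : ∀ u w : ↥S, (G.induce S).Adj u w ↔ G.Adj u.1 w.1 := fun u w => by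
    simp [SimpleGraph.comap_adj]
  have hB : ∀ u w : ↥S, B u w = A u.1 w.1 := by
    intro u w
    by_cases h : G.Adj u.1 w.1
    · rw [hA2 _ _ h, hBdef]
      show (if (G.induce S).Adj u w then (1:ℝ) else 0) = 1
      rw [if_pos ((hindadj u w).2 h)]
    · rw [hA0 _ _ h, hBdef]
      show (if (G.induce S).Adj u w then (1:ℝ) else 0) = 0
      rw [if_neg (fun h' => h ((hindadj u w).1 h'))]
  have hBs : ∀ u w : ↥S, B u w = B w u := by
    intro u w; rw [hB, hB, hAs]
  have hBnn : ∀ u w : ↥S, (0:ℝ) ≤ B u w := by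
    intro u w; rw [hB]; exact hAnn _ _
  have hBub : ∀ u w : ↥S, B u w ≤ 1 := by
    intro u w; rw [hB]; exact hAub _ _
  -- ρ' ≥ 0
  have hρ'0 : (0:ℝ) ≤ ρ' := by
    have hbdd := SpecAux.bdd B hBnn hBub
    set e : ↥S → ℝ := Pi.single ⟨u₀, hu₀S⟩ 1 with hedef
    have he0 : e ≠ 0 := by
      intro h
      rw [funext_iff] at h
      have := h ⟨u₀, hu₀S⟩
      rw [hedef] at this
      simp at this
    have h := le_ciSup hbdd (⟨e, he0⟩ : {x : ↥S → ℝ // x ≠ 0})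
    rw [hρ'Q]
    refine le_trans ?_ h
    have hee : e ⬝ᵥ e = 1 := by
      rw [hedef, single_dotProduct, Pi.single_eq_same, mul_one]
    have heBe : e ⬝ᵥ (B *ᵥ e) = 0 := by
      rw [hedef, Matrix.mulVec_single, single_dotProduct]
      have : B ⟨u₀, hu₀S⟩ ⟨u₀, hu₀S⟩ = 0 := by
        rw [hB]; exact hA0 _ _ (G.irrefl)
      simp [this]
    rw [hee, heBe]
    norm_num
  -- subtype sums
  have hsub2 : ∀ f : V → ℝ, (∑ u : ↥S, f u.1) = (∑ u, f u) - f v := by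
    intro f
    have h1 : ∑ u ∈ Finset.univ.filter (fun u => u ≠ v), f u = ∑ u : ↥S, f u.1 := by
      refine Finset.sum_subtype _ (fun u => ?_) f
      simp [hSdef]
    rw [← h1, Finset.filter_ne', Finset.sum_erase_eq_sub (Finset.mem_univ v)]
  -- Perron eigenvector of A
  obtain ⟨x, hx0, hx1, hxeig⟩ := (SpecAux.spectral A hAs hAnn hAub).2
  have heig : ∀ u, ∑ w, A u w * x w = ρ * x u := by
    intro u
    have h := congrFun hxeig u
    rw [hρQ]
    simpa [Matrix.mulVec, dotProduct] using h
  have hx1' : ∑ w, x w * x w = 1 := hx1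
  have hx1sq : ∑ w, (x w)^2 = 1 := by
    rw [← hx1']; exact Finset.sum_congr rfl fun w _ => sq (x w)
  set s := ∑ u ∈ Nv, x u with hsdef
  set t := (x v)^2 with htdef
  set σ := ∑ u ∈ Nv, (x u)^2 with hσdef
  -- s = ρ * x v
  have hsval : s = ρ * x v := by
    rw [← heig v, hsdef, hNvdef, Finset.sum_filter]
    refine Finset.sum_congr rfl fun w _ => ?_
    by_cases h : G.Adj v w
    · rw [hA2 v w h, if_pos h, one_mul]
    · rw [hA0 v w h, if_neg h, zero_mul]
  have hE1 : ρ^2 * t = s^2 := by rw [hsval, htdef]; ring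
  have hE2 : s^2 ≤ (d:ℝ) * σ := by
    have h := sq_sum_le_card_mul_sum_sq (s := Nv) (f := x)
    rw [hNvcard'] at h
    exact h
  have ht0 : 0 ≤ t := sq_nonneg _
  have hσ0 : 0 ≤ σ := Finset.sum_nonneg fun u _ => sq_nonneg _
  have htσ : t + σ ≤ 1 := by
    have h : ∑ u ∈ insert v Nv, (x u)^2 ≤ ∑ u, (x u)^2 :=
      Finset.sum_le_sum_of_subset_of_nonneg (Finset.subset_univ _)
        (fun i _ _ => sq_nonneg _)
    rw [Finset.sum_insert hvnot, hx1sq] at h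
    exact h
  -- splitting of sums over V
  set M := insert v Nv with hMdef
  set Rc := Finset.univ \ M with hRcdef
  have hsplit : ∀ g : V → ℝ, ∑ w, g w = g v + ∑ w ∈ Nv, g w + ∑ w ∈ Rc, g w := by
    intro g
    have h1 := Finset.sum_sdiff (Finset.subset_univ M) (f := g)
    rw [← h1, hMdef, Finset.sum_insert hvnot]
    ring
  have hRc : ∑ w ∈ Rc, (x w)^2 = 1 - t - σ := by
    have h := hsplit (fun w => (x w)^2)
    rw [hx1sq] at h
    rw [htdef, hσdef]
    linarith
  -- row sums within the neighborhood
  have hrow : ∀ u ∈ Nv, ∑ w ∈ Nv, A u w ≤ (d:ℝ) - 1 := by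
    intro u hu
    have h0 : A u u = 0 := hA0 u u (G.irrefl)
    rw [← Finset.sum_erase Nv h0]
    have h1 : ∑ w ∈ Nv.erase u, A u w ≤ ((Nv.erase u).card : ℝ) * 1 := by
      have := Finset.sum_le_card_nsmul (Nv.erase u) (fun w => A u w) 1
        (fun w _ => hAub u w)
      rwa [nsmul_eq_mul] at this
    rw [Finset.card_erase_of_mem hu, hNvcard] at h1
    have h2 : (((d - 1 : ℕ)) : ℝ) = (d:ℝ) - 1 := by
      rw [Nat.cast_sub hd1, Nat.cast_one]
    rw [h2, mul_one] at h1
    exact h1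
  -- the key structural inequality E3
  have hE3 : ρ*σ ≤ ρ*t + ((d:ℝ)-1)*σ + ρ*(1-t-σ) := by
    have e0 : ρ * σ = ∑ u ∈ Nv, ∑ w, x u * (A u w * x w) := by
      rw [hσdef, Finset.mul_sum]
      refine Finset.sum_congr rfl fun u _ => ?_
      have h1 : ∑ w, x u * (A u w * x w) = x u * ∑ w, A u w * x w := by
        rw [Finset.mul_sum]
      rw [h1, heig u]
      ring
    have e1 : ∀ u ∈ Nv, ∑ w, x u * (A u w * x w)
        = x u * (A u v * x v) + ∑ w ∈ Nv, x u * (A u w * x w)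
          + ∑ w ∈ Rc, x u * (A u w * x w) := fun u _ => hsplit _
    have e2 : ρ * σ = (∑ u ∈ Nv, x u * (A u v * x v))
        + (∑ u ∈ Nv, ∑ w ∈ Nv, x u * (A u w * x w))
        + (∑ u ∈ Nv, ∑ w ∈ Rc, x u * (A u w * x w)) := by
      rw [e0, Finset.sum_congr rfl e1, Finset.sum_add_distrib, Finset.sum_add_distrib]
    -- term 1
    have eT1 : ∑ u ∈ Nv, x u * (A u v * x v) = ρ * t := by
      have : ∀ u ∈ Nv, x u * (A u v * x v) = x u * x v := by
        intro u hu
        rw [hA2 u v ((hNvmem u).1 hu).symm]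
        ring
      rw [Finset.sum_congr rfl this, ← Finset.sum_mul]
      rw [← hsdef, hsval, htdef]
      ring
    -- term 2
    have eT2 : ∑ u ∈ Nv, ∑ w ∈ Nv, x u * (A u w * x w) ≤ ((d:ℝ)-1) * σ := by
      have step1 : ∑ u ∈ Nv, ∑ w ∈ Nv, x u * (A u w * x w)
          ≤ ∑ u ∈ Nv, ∑ w ∈ Nv, (A u w * (x u)^2 + A u w * (x w)^2)/2 := by
        refine Finset.sum_le_sum fun u _ => Finset.sum_le_sum fun w _ => ?_
        have h1 : 2*(x u)*(x w) ≤ (x u)^2 + (x w)^2 := two_mul_le_add_sq _ _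
        have h2 : A u w * (2*(x u)*(x w)) ≤ A u w * ((x u)^2 + (x w)^2) :=
          mul_le_mul_of_nonneg_left h1 (hAnn u w)
        nlinarith [h2]
      have split2 : ∑ u ∈ Nv, ∑ w ∈ Nv, (A u w * (x u)^2 + A u w * (x w)^2)/2
          = (∑ u ∈ Nv, ∑ w ∈ Nv, A u w * (x u)^2)/2
            + (∑ u ∈ Nv, ∑ w ∈ Nv, A u w * (x w)^2)/2 := by
        simp only [← Finset.sum_div, Finset.sum_add_distrib]
        ring
      have half1 : ∑ u ∈ Nv, ∑ w ∈ Nv, A u w * (x u)^2 ≤ ((d:ℝ)-1) * σ := by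
        have : ∀ u ∈ Nv, ∑ w ∈ Nv, A u w * (x u)^2 ≤ ((d:ℝ)-1) * (x u)^2 := by
          intro u hu
          rw [← Finset.sum_mul]
          exact mul_le_mul_of_nonneg_right (hrow u hu) (sq_nonneg _)
        refine le_trans (Finset.sum_le_sum this) ?_
        rw [hσdef, Finset.mul_sum]
      have half2 : ∑ u ∈ Nv, ∑ w ∈ Nv, A u w * (x w)^2 ≤ ((d:ℝ)-1) * σ := by
        rw [Finset.sum_comm]
        have : ∀ w ∈ Nv, ∑ u ∈ Nv, A u w * (x w)^2 ≤ ((d:ℝ)-1) * (x w)^2 := by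
          intro w hw
          rw [← Finset.sum_mul]
          refine mul_le_mul_of_nonneg_right ?_ (sq_nonneg _)
          have : ∑ u ∈ Nv, A u w = ∑ u ∈ Nv, A w u :=
            Finset.sum_congr rfl fun u _ => hAs u w
          rw [this]
          exact hrow w hw
        refine le_trans (Finset.sum_le_sum this) ?_
        rw [hσdef, Finset.mul_sum]
      calc ∑ u ∈ Nv, ∑ w ∈ Nv, x u * (A u w * x w)
          ≤ (∑ u ∈ Nv, ∑ w ∈ Nv, A u w * (x u)^2)/2
            + (∑ u ∈ Nv, ∑ w ∈ Nv, A u w * (x w)^2)/2 := by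
            rw [← split2]; exact step1
        _ ≤ ((d:ℝ)-1)*σ/2 + ((d:ℝ)-1)*σ/2 := by
            gcongr
        _ = ((d:ℝ)-1)*σ := by ring
    -- term 3
    have eT3 : ∑ u ∈ Nv, ∑ w ∈ Rc, x u * (A u w * x w) ≤ ρ * (1-t-σ) := by
      rw [Finset.sum_comm]
      have hper : ∀ w ∈ Rc, ∑ u ∈ Nv, x u * (A u w * x w) ≤ ρ * (x w)^2 := by
        intro w _
        have e1 : ∑ u ∈ Nv, x u * (A u w * x w) = x w * ∑ u ∈ Nv, A w u * x u := by
          rw [Finset.mul_sum]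
          refine Finset.sum_congr rfl fun u _ => ?_
          rw [hAs u w]; ring
        rw [e1]
        have e2 : ∑ u ∈ Nv, A w u * x u ≤ ∑ u, A w u * x u :=
          Finset.sum_le_sum_of_subset_of_nonneg (Finset.subset_univ _)
            (fun u _ _ => mul_nonneg (hAnn w u) (hx0 u))
        have e3 : x w * ∑ u ∈ Nv, A w u * x u ≤ x w * ∑ u, A w u * x u :=
          mul_le_mul_of_nonneg_left e2 (hx0 w)
        rw [heig w] at e3
        calc x w * ∑ u ∈ Nv, A w u * x u ≤ x w * (ρ * x w) := e3
          _ = ρ * (x w)^2 := by ring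
      calc ∑ w ∈ Rc, ∑ u ∈ Nv, x u * (A u w * x w) ≤ ∑ w ∈ Rc, ρ * (x w)^2 :=
            Finset.sum_le_sum hper
        _ = ρ * ∑ w ∈ Rc, (x w)^2 := by rw [Finset.mul_sum]
        _ = ρ * (1-t-σ) := by rw [hRc]
    rw [e2]
    have := add_le_add (add_le_add (le_of_eq eT1) eT2) eT3
    linarith [this]
  -- E4 via the induced graph
  have hE4 : ρ^2*(1-t) - 2*(ρ^2*t) + (d:ℝ)*t ≤ ρ'^2*(1-t) := by
    set y : ↥S → ℝ := fun u => x u.1 with hydef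
    have hP2 := (SpecAux.spectral B hBs hBnn hBub).1 y
    -- evaluate B *ᵥ y
    have heval : ∀ u : ↥S, (B *ᵥ y) u = ρ * x u.1 - A u.1 v * x v := by
      intro u
      have e1 : (B *ᵥ y) u = ∑ w : ↥S, A u.1 w.1 * x w.1 := by
        show ∑ w : ↥S, B u w * y w = _
        exact Finset.sum_congr rfl fun w _ => by rw [hB, hydef]
      rw [e1, hsub2 (fun w => A u.1 w * x w), heig u.1]
    -- norms
    have hyy : y ⬝ᵥ y = 1 - t := by
      show ∑ u : ↥S, y u * y u = 1 - t
      have : ∑ u : ↥S, x u.1 * x u.1 = (∑ u, x u * x u) - x v * x v :=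
        hsub2 (fun w => x w * x w)
      rw [hydef]
      rw [this, hx1', htdef]
      ring
    have hAv1 : ∑ w, A w v * x w = ρ * x v := by
      rw [← heig v]
      exact Finset.sum_congr rfl fun w _ => by rw [hAs w v]
    have hAv2 : ∑ w, A w v * A w v = (d:ℝ) := by
      have e1 : ∀ w, A w v * A w v = if G.Adj v w then (1:ℝ) else 0 := by
        intro w
        by_cases h : G.Adj v w
        · rw [hA2 w v h.symm, if_pos h, mul_one]
        · rw [hA0 w v (fun h' => h h'.symm), if_neg h, mul_zero]
      rw [Finset.sum_congr rfl fun w _ => e1 w]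
      rw [Finset.sum_boole]
      exact_mod_cast hNvcard
    have hBB : (B *ᵥ y) ⬝ᵥ (B *ᵥ y) = ρ^2*(1-t) - 2*(ρ^2*t) + (d:ℝ)*t := by
      have e1 : (B *ᵥ y) ⬝ᵥ (B *ᵥ y)
          = ∑ u : ↥S, (ρ * x u.1 - A u.1 v * x v) * (ρ * x u.1 - A u.1 v * x v) := by
        show ∑ u : ↥S, (B *ᵥ y) u * (B *ᵥ y) u = _
        exact Finset.sum_congr rfl fun u _ => by rw [heval u]
      have e2 : ∑ u : ↥S, (ρ * x u.1 - A u.1 v * x v) * (ρ * x u.1 - A u.1 v * x v)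
          = (∑ u, (ρ * x u - A u v * x v) * (ρ * x u - A u v * x v))
            - (ρ * x v - A v v * x v) * (ρ * x v - A v v * x v) :=
        hsub2 (fun w => (ρ * x w - A w v * x v) * (ρ * x w - A w v * x v))
      have e3 : ∑ u, (ρ * x u - A u v * x v) * (ρ * x u - A u v * x v)
          = ρ^2 * (∑ u, x u * x u) - 2*ρ*(x v) * (∑ u, A u v * x u)
            + (x v)^2 * (∑ u, A u v * A u v) := by
        rw [Finset.mul_sum, Finset.mul_sum, Finset.mul_sum,
          ← Finset.sum_sub_distrib, ← Finset.sum_add_distrib]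
        exact Finset.sum_congr rfl fun u _ => by ring
      rw [e1, e2, e3, hx1', hAv1, hAv2, hA0 v v (G.irrefl), htdef]
      ring
    rw [hBB, hyy] at hP2
    calc ρ^2*(1-t) - 2*(ρ^2*t) + (d:ℝ)*t ≤ (SpecAux.supQ B)^2 * (1-t) := hP2
      _ = ρ'^2*(1-t) := by rw [← hρ'Q]
  -- conclude by the algebraic lemma
  have hdd : (1:ℝ) ≤ (d:ℝ) := by exact_mod_cast hd1
  have := algMain ρ ρ' t σ (d:ℝ) s hρ1 hρ'0 hdd ht0 hσ0 htσ hE1 hE2 hE3 hE4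
  calc ρ ≤ Real.sqrt (ρ'^2 + 2*(d:ℝ) - 1) := this
    _ = Real.sqrt (ρ'^2 + 2*(d:ℝ) - 1) := rfl
end

section
/- Let G be a triangle-free graph with m edges. Then the spectral radius of its adjacency matrix satisfies ρ(G) ≤ √m. -/
open Matrix

section Aux

open Finset

variable {V : Type*} [Fintype V] (G : SimpleGraph V)

lemma adjMat_apply (i j : V) [h : Decidable (G.Adj i j)] :
    adjMat G i j = if G.Adj i j then 1 else 0 := by
  unfold adjMat
  simp only [Matrix.of_apply]
  by_cases hij : G.Adj i j <;> simp [hij]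

lemma adjMat_nonneg (i j : V) : 0 ≤ adjMat G i j := by
  classical
  rw [adjMat_apply]
  split <;> norm_num

lemma adjMat_symm (i j : V) : adjMat G i j = adjMat G j i := by
  classical
  rw [adjMat_apply, adjMat_apply]
  by_cases h : G.Adj i j
  · rw [if_pos h, if_pos h.symm]
  · rw [if_neg h, if_neg fun h' => h h'.symm]

lemma adjMat_sq (i j : V) : adjMat G i j * adjMat G i j = adjMat G i j := by
  classical
  rw [adjMat_apply]
  split <;> norm_num

/-- In a triangle-free graph, rows `u`, `v` of the adjacency matrix for adjacent
`u, v` sum to at most 1 in each coordinate. -/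
lemma adjMat_add_le_one (hfree : G.CliqueFree 3) {u v : V} (huv : G.Adj u v) (w : V) :
    adjMat G u w + adjMat G v w ≤ 1 := by
  classical
  rw [adjMat_apply, adjMat_apply]
  by_cases h1 : G.Adj u w
  · by_cases h2 : G.Adj v w
    · exact absurd (SimpleGraph.is3Clique_triple_iff.mpr ⟨huv, h1, h2⟩) (hfree _)
    · simp [h1, h2]
  · by_cases h2 : G.Adj v w <;> simp [h1, h2]

/-- Motzkin–Straus-type bound for triangle-free graphs with nonnegative weights. -/
lemma key_bound (hfree : G.CliqueFree 3) (y : V → ℝ) (hy : ∀ i, 0 ≤ y i) :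
    ∑ i, ∑ j, adjMat G i j * y i * y j ≤ (∑ i, y i) ^ 2 / 2 := by
  classical
  set A := adjMat G with hA
  set s := ∑ i, y i with hs
  set T := ∑ i, ∑ j, A i j * y i * y j with hT
  set S : V → ℝ := fun u => ∑ v, A u v * y v with hSdef
  have hAnn : ∀ i j, 0 ≤ A i j := adjMat_nonneg G
  have hS_nonneg : ∀ u, 0 ≤ S u := fun u =>
    Finset.sum_nonneg fun v _ => mul_nonneg (hAnn u v) (hy v)
  have hs_nonneg : 0 ≤ s := Finset.sum_nonneg fun i _ => hy i
  have hT_eq : T = ∑ u, y u * S u := by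
    rw [hT]
    refine Finset.sum_congr rfl fun u _ => ?_
    rw [Finset.mul_sum]
    exact Finset.sum_congr rfl fun v _ => by ring
  have hT_nonneg : 0 ≤ T := by
    rw [hT_eq]
    exact Finset.sum_nonneg fun u _ => mul_nonneg (hy u) (hS_nonneg u)
  -- for adjacent u v, S u + S v ≤ s
  have hSS : ∀ u v, G.Adj u v → S u + S v ≤ s := by
    intro u v huv
    have : S u + S v = ∑ w, (A u w + A v w) * y w := by
      rw [hSdef]
      simp only
      rw [← Finset.sum_add_distrib]
      exact Finset.sum_congr rfl fun w _ => by ring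
    rw [this, hs]
    refine Finset.sum_le_sum fun w _ => ?_
    calc (A u w + A v w) * y w ≤ 1 * y w :=
          mul_le_mul_of_nonneg_right (adjMat_add_le_one G hfree huv w) (hy w)
      _ = y w := one_mul _
  -- termwise bound
  have h1 : ∑ u, ∑ v, A u v * (y u * y v * (S u + S v)) ≤ s * T := by
    have : s * T = ∑ u, ∑ v, A u v * (y u * y v * s) := by
      rw [hT, Finset.mul_sum]
      refine Finset.sum_congr rfl fun u _ => ?_
      rw [Finset.mul_sum]
      exact Finset.sum_congr rfl fun v _ => by ring
    rw [this]
    refine Finset.sum_le_sum fun u _ => Finset.sum_le_sum fun v _ => ?_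
    by_cases huv : G.Adj u v
    · refine mul_le_mul_of_nonneg_left ?_ (hAnn u v)
      exact mul_le_mul_of_nonneg_left (hSS u v huv) (mul_nonneg (hy u) (hy v))
    · have : A u v = 0 := by rw [hA, adjMat_apply, if_neg huv]
      simp [this]
  -- the double sum equals 2 ∑ y S²
  have h2 : ∑ u, ∑ v, A u v * (y u * y v * (S u + S v)) = 2 * ∑ u, y u * S u ^ 2 := by
    have split : ∀ u v : V, A u v * (y u * y v * (S u + S v)) =
        A u v * (y u * y v * S u) + A u v * (y u * y v * S v) := fun u v => by ring
    simp only [split, Finset.sum_add_distrib]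
    have e1 : ∀ u : V, ∑ v, A u v * (y u * y v * S u) = y u * S u ^ 2 := by
      intro u
      have : S u = ∑ v, A u v * y v := rfl
      calc ∑ v, A u v * (y u * y v * S u) = (y u * S u) * ∑ v, A u v * y v := by
            rw [Finset.mul_sum]
            exact Finset.sum_congr rfl fun v _ => by ring
        _ = y u * S u ^ 2 := by rw [← this]; ring
    have e2 : ∑ u, ∑ v, A u v * (y u * y v * S v) = ∑ u, ∑ v, A u v * (y u * y v * S u) := by
      rw [Finset.sum_comm]
      refine Finset.sum_congr rfl fun u _ => Finset.sum_congr rfl fun v _ => ?_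
      rw [hA, adjMat_symm G v u]
      ring
    rw [e2]
    simp only [e1]
    ring
  have h3 : 2 * ∑ u, y u * S u ^ 2 ≤ s * T := by rw [← h2]; exact h1
  -- Cauchy–Schwarz
  have h4 : T ^ 2 ≤ s * ∑ u, y u * S u ^ 2 := by
    have hTs : T = ∑ u, Real.sqrt (y u) * (Real.sqrt (y u) * S u) := by
      rw [hT_eq]
      refine Finset.sum_congr rfl fun u _ => ?_
      rw [← mul_assoc, Real.mul_self_sqrt (hy u)]
    have := Finset.sum_mul_sq_le_sq_mul_sq Finset.univ
      (fun u => Real.sqrt (y u)) (fun u => Real.sqrt (y u) * S u)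
    rw [← hTs] at this
    calc T ^ 2 ≤ (∑ u, Real.sqrt (y u) ^ 2) * ∑ u, (Real.sqrt (y u) * S u) ^ 2 := this
      _ = s * ∑ u, y u * S u ^ 2 := by
          rw [hs]
          congr 1
          · exact Finset.sum_congr rfl fun u _ => Real.sq_sqrt (hy u)
          · refine Finset.sum_congr rfl fun u _ => ?_
            rw [mul_pow, Real.sq_sqrt (hy u)]
  -- conclude
  have hW : 0 ≤ ∑ u, y u * S u ^ 2 :=
    Finset.sum_nonneg fun u _ => mul_nonneg (hy u) (sq_nonneg _)
  rcases eq_or_lt_of_le hT_nonneg with h | h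
  · rw [← h]; positivity
  · nlinarith [mul_le_mul_of_nonneg_left h3 hs_nonneg]

lemma sum_adjMat (m : ℕ) (hm : G.edgeSet.ncard = m) :
    ∑ i, ∑ j, adjMat G i j = 2 * (m : ℝ) := by
  classical
  have hdeg : ∀ i, ∑ j, adjMat G i j = (G.degree i : ℝ) := by
    intro i
    have : ∑ j, adjMat G i j = ∑ j, if G.Adj i j then (1 : ℝ) else 0 :=
      Finset.sum_congr rfl fun j _ => adjMat_apply G i j
    rw [this, Finset.sum_boole, SimpleGraph.degree, SimpleGraph.neighborFinset_eq_filter]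
  simp only [hdeg]
  rw [← Nat.cast_sum, SimpleGraph.sum_degrees_eq_twice_card_edges]
  rw [← hm, Set.ncard_eq_toFinset_card' G.edgeSet]
  push_cast
  rfl

end Aux

/-- Nosal's theorem: a triangle-free graph with `m` edges has spectral radius
at most `√m`. -/
theorem stmt_9 {V : Type*} [Fintype V] (G : SimpleGraph V) (m : ℕ)
    (hfree : G.CliqueFree 3) (hm : G.edgeSet.ncard = m) :
    specRad G ≤ Real.sqrt m := by
  classical
  rw [specRad]
  refine Real.iSup_le (fun x => ?_) (Real.sqrt_nonneg _)
  obtain ⟨x, hx⟩ := x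
  set A := adjMat G with hA
  have hQ : x ⬝ᵥ (A *ᵥ x) = ∑ i, ∑ j, A i j * x i * x j := by
    simp only [dotProduct, Matrix.mulVec, Finset.mul_sum]
    exact Finset.sum_congr rfl fun i _ => Finset.sum_congr rfl fun j _ => by ring
  have hxx : x ⬝ᵥ x = ∑ i, x i ^ 2 := by
    simp [dotProduct, sq]
  have hspos : 0 < ∑ i, x i ^ 2 := by
    obtain ⟨i, hi⟩ := Function.ne_iff.mp hx
    exact Finset.sum_pos' (fun j _ => sq_nonneg _)
      ⟨i, Finset.mem_univ i,
        lt_of_le_of_ne (sq_nonneg _) (Ne.symm (pow_ne_zero 2 hi))⟩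
  set Q := ∑ i, ∑ j, A i j * x i * x j with hQdef
  set s := ∑ i, x i ^ 2 with hsdef
  -- Cauchy–Schwarz over pairs
  have hCS : Q ^ 2 ≤ (2 * (m : ℝ)) * ∑ i, ∑ j, A i j * x i ^ 2 * x j ^ 2 := by
    have key := Finset.sum_mul_sq_le_sq_mul_sq (Finset.univ ×ˢ Finset.univ)
      (fun p : V × V => A p.1 p.2) (fun p : V × V => A p.1 p.2 * (x p.1 * x p.2))
    have e1 : ∑ p ∈ Finset.univ ×ˢ Finset.univ,
        (fun p : V × V => A p.1 p.2) p * (fun p : V × V => A p.1 p.2 * (x p.1 * x p.2)) p = Q := by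
      rw [Finset.sum_product, hQdef]
      refine Finset.sum_congr rfl fun i _ => Finset.sum_congr rfl fun j _ => ?_
      simp only
      rw [← mul_assoc, adjMat_sq]
      ring
    have e2 : ∑ p ∈ Finset.univ ×ˢ Finset.univ, (fun p : V × V => A p.1 p.2) p ^ 2
        = 2 * (m : ℝ) := by
      rw [← sum_adjMat G m hm, Finset.sum_product]
      exact Finset.sum_congr rfl fun i _ => Finset.sum_congr rfl fun j _ => by
        simp only [sq]; rw [adjMat_sq]
    have e3 : ∑ p ∈ Finset.univ ×ˢ Finset.univ,
        ((fun p : V × V => A p.1 p.2 * (x p.1 * x p.2)) p) ^ 2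
        = ∑ i, ∑ j, A i j * x i ^ 2 * x j ^ 2 := by
      rw [Finset.sum_product]
      refine Finset.sum_congr rfl fun i _ => Finset.sum_congr rfl fun j _ => ?_
      have hAsq : A i j * A i j = A i j := by rw [hA]; exact adjMat_sq G i j
      simp only
      rw [show (A i j * (x i * x j)) ^ 2 = (A i j * A i j) * (x i ^ 2 * x j ^ 2) from by ring,
        hAsq]
      ring
    rw [e1, e2, e3] at key
    exact key
  -- triangle-free bound with y = x²
  have hMS : ∑ i, ∑ j, A i j * x i ^ 2 * x j ^ 2 ≤ s ^ 2 / 2 := by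
    have := key_bound G hfree (fun i => x i ^ 2) (fun i => sq_nonneg _)
    simpa [hsdef] using this
  have hQ2 : Q ^ 2 ≤ (m : ℝ) * s ^ 2 := by
    calc Q ^ 2 ≤ (2 * (m : ℝ)) * ∑ i, ∑ j, A i j * x i ^ 2 * x j ^ 2 := hCS
      _ ≤ (2 * (m : ℝ)) * (s ^ 2 / 2) := by
          refine mul_le_mul_of_nonneg_left hMS ?_
          positivity
      _ = (m : ℝ) * s ^ 2 := by ring
  have hQle : Q ≤ Real.sqrt m * s := by
    have h1 : Q ≤ |Q| := le_abs_self _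
    have h2 : |Q| = Real.sqrt (Q ^ 2) := (Real.sqrt_sq_eq_abs Q).symm
    have h3 : Real.sqrt (Q ^ 2) ≤ Real.sqrt ((m : ℝ) * s ^ 2) := Real.sqrt_le_sqrt hQ2
    have h4 : Real.sqrt ((m : ℝ) * s ^ 2) = Real.sqrt m * s := by
      rw [Real.sqrt_mul (Nat.cast_nonneg m), Real.sqrt_sq hspos.le]
    linarith [h2 ▸ h3, h4 ▸ h3]
  rw [hQ, hxx, div_le_iff₀ hspos]
  linarith
end

section
/- Let G be a graph in which every vertex of the neighborhood N(u*) of a fixed vertex u* has at most r neighbors inside N(u*) (equivalently, G is K_{2,r+1}-free restricted appropriately). If u ∈ U₂' satisfies Σ_{w ∈ N_W(u)} d_W(w) ≤ r², d_U(u) ≤ r, d_{U}(w) ≤ r for all w ∈ N_W(u), and d_W(u) > r(ρ+2r)/(ρ-2r) where ρ > 2r, then (1/2) d_U(u) x_u + Σ_{w∈N_W(u)} x_w < (1/2) d_W(u) x_{u*}, where x is the Perron vector of G normalized so x_{u*} is maximal. -/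
open Matrix

/-- Claim 3 in the proof of Theorem 1.3. Here `U = N(u*)`, `W = V ∖ N[u*]`,
`d_S(v) = |N(v) ∩ S|`, and `X` is the Perron vector of `G` with maximum entry at
`u*`. If `u ∈ U` satisfies `Σ_{w∈N_W(u)} d_W(w) ≤ r²`, `d_U(u) ≤ r`,
`d_U(w) ≤ r` for all `w ∈ N_W(u)`, and `d_W(u) > r(ρ+2r)/(ρ-2r)` where `ρ > 2r`,
then `(1/2) d_U(u) x_u + Σ_{w∈N_W(u)} x_w < (1/2) d_W(u) x_{u*}`. -/
theorem stmt_14 {V : Type*} [Fintype V] (G : SimpleGraph V)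
    (ρ : ℝ) (X : V → ℝ) (heig : adjMat G *ᵥ X = ρ • X)
    (hnn : ∀ v, 0 ≤ X v) (ustar u : V) (hmax : ∀ v, X v ≤ X ustar)
    (hpos : 0 < X ustar) (r : ℝ) (hr : 2 ≤ r) (hρ : 2 * r < ρ)
    (hu : u ∈ G.neighborSet ustar)
    (h1 : (∑ᶠ w ∈ G.neighborSet u ∩ (insert ustar (G.neighborSet ustar))ᶜ,
        ((G.neighborSet w ∩ (insert ustar (G.neighborSet ustar))ᶜ).ncard : ℝ)) ≤ r ^ 2)
    (h2 : ((G.neighborSet u ∩ G.neighborSet ustar).ncard : ℝ) ≤ r)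
    (h3 : ∀ w ∈ G.neighborSet u ∩ (insert ustar (G.neighborSet ustar))ᶜ,
        ((G.neighborSet w ∩ G.neighborSet ustar).ncard : ℝ) ≤ r)
    (h4 : ((G.neighborSet u ∩ (insert ustar (G.neighborSet ustar))ᶜ).ncard : ℝ) >
        r * (ρ + 2 * r) / (ρ - 2 * r)) :
    (1 / 2) * ((G.neighborSet u ∩ G.neighborSet ustar).ncard : ℝ) * X u +
      (∑ᶠ w ∈ G.neighborSet u ∩ (insert ustar (G.neighborSet ustar))ᶜ, X w) <
    (1 / 2) * ((G.neighborSet u ∩ (insert ustar (G.neighborSet ustar))ᶜ).ncard : ℝ) *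
      X ustar := by
  classical
  set Wc : Set V := (insert ustar (G.neighborSet ustar))ᶜ with hWc
  set S : Set V := G.neighborSet u ∩ Wc with hS
  have hρ0 : (0:ℝ) < ρ := by nlinarith
  -- pointwise eigenvalue equation
  have heq : ∀ w, ρ * X w = ∑ v, (if G.Adj w v then X v else 0) := by
    intro w
    have h := congrFun heig w
    simp only [mulVec, dotProduct, Pi.smul_apply, smul_eq_mul, adjMat, Matrix.of_apply] at h
    rw [← h]
    refine Finset.sum_congr rfl fun v _ => ?_
    by_cases hadj : G.Adj w v
    · simp [hadj]
    · simp [hadj]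
  have card_eq : ∀ (A : Set V) (inst : DecidablePred (· ∈ A)),
      (((@Finset.filter V (· ∈ A) inst Finset.univ).card : ℝ)) = (A.ncard : ℝ) := by
    intro A inst
    congr 1
    rw [Set.ncard_eq_toFinset_card']
    congr 1
    ext v
    simp
  have sum_le : ∀ (A : Set V) (inst : DecidablePred (· ∈ A)),
      (∑ v, (@ite ℝ (v ∈ A) (inst v) (X v) 0)) ≤ (A.ncard : ℝ) * X ustar := by
    intro A inst
    rw [← Finset.sum_filter]
    calc (∑ v ∈ @Finset.filter V (· ∈ A) inst Finset.univ, X v)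
        ≤ ∑ v ∈ @Finset.filter V (· ∈ A) inst Finset.univ, X ustar :=
          Finset.sum_le_sum fun v _ => hmax v
      _ = (((@Finset.filter V (· ∈ A) inst Finset.univ).card : ℝ)) * X ustar := by
          rw [Finset.sum_const, nsmul_eq_mul]
      _ = (A.ncard : ℝ) * X ustar := by rw [card_eq]
  -- bound on each w ∈ S
  have hbound : ∀ w ∈ S, ρ * X w ≤
      (r + ((G.neighborSet w ∩ Wc).ncard : ℝ)) * X ustar := by
    intro w hw
    have hwW : w ∈ Wc := hw.2
    have hnadj : ¬ G.Adj w ustar := by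
      intro h
      exact hwW (Set.mem_insert_iff.2 (Or.inr h.symm))
    rw [heq w]
    have key : (∑ v, (if G.Adj w v then X v else 0)) ≤
        (∑ v, (if v ∈ G.neighborSet w ∩ G.neighborSet ustar then X v else 0)) +
        (∑ v, (if v ∈ G.neighborSet w ∩ Wc then X v else 0)) := by
      rw [← Finset.sum_add_distrib]
      refine Finset.sum_le_sum fun v _ => ?_
      by_cases hadj : G.Adj w v
      · have hvne : v ≠ ustar := by
          rintro rfl; exact hnadj hadj
        have hor : v ∈ G.neighborSet w ∩ G.neighborSet ustar ∨ v ∈ G.neighborSet w ∩ Wc := by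
          by_cases hvU : v ∈ G.neighborSet ustar
          · exact Or.inl ⟨hadj, hvU⟩
          · refine Or.inr ⟨hadj, ?_⟩
            simp only [hWc, Set.mem_compl_iff, Set.mem_insert_iff]
            push_neg
            exact ⟨hvne, hvU⟩
        rw [if_pos hadj]
        split_ifs with hA hB hB
        · linarith [hnn v]
        · linarith
        · linarith
        · exact absurd hor (by tauto)
      · rw [if_neg hadj]
        split_ifs with hA hB hB
        · exact absurd hA.1 hadj
        · exact absurd hA.1 hadj
        · exact absurd hB.1 hadj
        · norm_num
    calc (∑ v, (if G.Adj w v then X v else 0)) ≤ _ := key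
      _ ≤ ((G.neighborSet w ∩ G.neighborSet ustar).ncard : ℝ) * X ustar +
          ((G.neighborSet w ∩ Wc).ncard : ℝ) * X ustar :=
          add_le_add (sum_le _ _) (sum_le _ _)
      _ ≤ (r + ((G.neighborSet w ∩ Wc).ncard : ℝ)) * X ustar := by
          have := h3 w hw
          nlinarith [hpos.le]
  -- convert finsums to finset sums over sF
  set sF : Finset V := Finset.univ.filter (· ∈ S) with hsF
  have hcoe : (↑sF : Set V) = S := by
    ext v; simp [hsF]
  have hfin : ∀ (f : V → ℝ), (∑ᶠ w ∈ S, f w) = ∑ w ∈ sF, f w := by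
    intro f
    have h := finsum_mem_coe_finset (s := sF) (f := f)
    rwa [hcoe] at h
  have hd : ((S.ncard : ℝ)) = (sF.card : ℝ) := (card_eq S _).symm
  have h1' : (∑ w ∈ sF, ((G.neighborSet w ∩ Wc).ncard : ℝ)) ≤ r ^ 2 := by
    rw [← hfin]; exact h1
  have hT : ρ * (∑ w ∈ sF, X w) ≤ (r * (S.ncard : ℝ) + r ^ 2) * X ustar := by
    rw [Finset.mul_sum]
    calc (∑ w ∈ sF, ρ * X w)
        ≤ ∑ w ∈ sF, (r + ((G.neighborSet w ∩ Wc).ncard : ℝ)) * X ustar := by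
          refine Finset.sum_le_sum fun w hw => hbound w ?_
          have : w ∈ (↑sF : Set V) := hw
          rwa [hcoe] at this
      _ = (r * (sF.card : ℝ) +
            (∑ w ∈ sF, ((G.neighborSet w ∩ Wc).ncard : ℝ))) * X ustar := by
          rw [← Finset.sum_mul, Finset.sum_add_distrib, Finset.sum_const, nsmul_eq_mul]
          ring
      _ ≤ (r * (S.ncard : ℝ) + r ^ 2) * X ustar := by
          rw [hd]
          nlinarith [hpos.le]
  have hTnn : (0:ℝ) ≤ ∑ w ∈ sF, X w :=
    Finset.sum_nonneg fun w _ => hnn w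
  have h4' : r * (ρ + 2 * r) < (S.ncard : ℝ) * (ρ - 2 * r) :=
    (div_lt_iff₀ (by linarith)).1 h4
  have hku : (0:ℝ) ≤ ((G.neighborSet u ∩ G.neighborSet ustar).ncard : ℝ) := Nat.cast_nonneg _
  rw [hfin]
  nlinarith [mul_le_mul h2 (hmax u) (hnn u) (by linarith : (0:ℝ) ≤ r),
    mul_pos hρ0 hpos, hpos.le, mul_lt_mul_of_pos_left h4' hpos, hnn u]
end
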